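/- L²-boundedness of the nonlinear compact difference scheme: let N ≥ 1, τ > 0, λ > 0, and let u, v, w : Fin (N+1) → (periodic grid functions on the M₁×M₂ periodic grid with step size h > 0) be sequences such that (i) for every r with 1 ≤ r ≤ N, writing ū = (u^r + u^{r−1})/2, v̄ = (v^r + v^{r−1})/2, w̄ = (w^r + w^{r−1})/2, the equation (u^r − u^{r−1})/τ + ψh(ū, ū) − (h²/2)·(ψx(v̄, ū) + ψy(w̄, ū)) = λ·(v̄ + w̄) holds at every grid point, and (ii) for every r with 0 ≤ r ≤ N, v^r = δxx u^r − (h²/12)·δxx v^r and w^r = δyy u^r − (h²/12)·δyy w^r at every grid point. Then ‖u^m‖ ≤ ‖u^0‖ for every m with 1 ≤ m ≤ N. -/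

import Mathlib

open Real Finset Asymptotics

/-- A periodic grid function on the `M₁ × M₂` periodic grid. -/
abbrev GridFun (M₁ M₂ : ℕ) : Type := ZMod M₁ × ZMod M₂ → ℝ

variable {M₁ M₂ : ℕ}

/-- Discrete inner product `⟨u,v⟩ = h² Σ_a Σ_b u(a,b) v(a,b)`. -/
noncomputable def gip [NeZero M₁] [NeZero M₂] (h : ℝ) (u v : GridFun M₁ M₂) : ℝ :=
  h ^ 2 * ∑ a : ZMod M₁, ∑ b : ZMod M₂, u (a, b) * v (a, b)

/-- Discrete L² norm. -/
noncomputable def gnorm [NeZero M₁] [NeZero M₂] (h : ℝ) (v : GridFun M₁ M₂) : ℝ :=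
  Real.sqrt (gip h v v)

/-- Forward difference in `x`. -/
noncomputable def dx (h : ℝ) (v : GridFun M₁ M₂) : GridFun M₁ M₂ :=
  fun p => (v (p.1 + 1, p.2) - v p) / h

/-- Forward difference in `y`. -/
noncomputable def dy (h : ℝ) (v : GridFun M₁ M₂) : GridFun M₁ M₂ :=
  fun p => (v (p.1, p.2 + 1) - v p) / h

/-- Central difference in `x`. -/
noncomputable def dhx (h : ℝ) (v : GridFun M₁ M₂) : GridFun M₁ M₂ :=
  fun p => (v (p.1 + 1, p.2) - v (p.1 - 1, p.2)) / (2 * h)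

/-- Central difference in `y`. -/
noncomputable def dhy (h : ℝ) (v : GridFun M₁ M₂) : GridFun M₁ M₂ :=
  fun p => (v (p.1, p.2 + 1) - v (p.1, p.2 - 1)) / (2 * h)

/-- Second difference in `x`. -/
noncomputable def dxx (h : ℝ) (v : GridFun M₁ M₂) : GridFun M₁ M₂ :=
  fun p => (v (p.1 + 1, p.2) - 2 * v p + v (p.1 - 1, p.2)) / h ^ 2

/-- Second difference in `y`. -/
noncomputable def dyy (h : ℝ) (v : GridFun M₁ M₂) : GridFun M₁ M₂ :=
  fun p => (v (p.1, p.2 + 1) - 2 * v p + v (p.1, p.2 - 1)) / h ^ 2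

/-- Combined central difference `δ̂h = δ̂x + δ̂y`. -/
noncomputable def dhath (h : ℝ) (v : GridFun M₁ M₂) : GridFun M₁ M₂ :=
  fun p => dhx h v p + dhy h v p

/-- Discrete H¹ seminorm. -/
noncomputable def snorm1 [NeZero M₁] [NeZero M₂] (h : ℝ) (v : GridFun M₁ M₂) : ℝ :=
  Real.sqrt (gnorm h (dx h v) ^ 2 + gnorm h (dy h v) ^ 2)

/-- Bilinear operator `ψx(u,v) = (1/3)(u δ̂x v + δ̂x (u v))`. -/
noncomputable def psix (h : ℝ) (u v : GridFun M₁ M₂) : GridFun M₁ M₂ :=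
  fun p => (1 / 3 : ℝ) * (u p * dhx h v p + dhx h (fun q => u q * v q) p)

/-- Bilinear operator `ψy(u,v) = (1/3)(u δ̂y v + δ̂y (u v))`. -/
noncomputable def psiy (h : ℝ) (u v : GridFun M₁ M₂) : GridFun M₁ M₂ :=
  fun p => (1 / 3 : ℝ) * (u p * dhy h v p + dhy h (fun q => u q * v q) p)

/-- Bilinear operator `ψh(u,v) = (1/3)(u δ̂h v + δ̂h (u v))`. -/
noncomputable def psih (h : ℝ) (u v : GridFun M₁ M₂) : GridFun M₁ M₂ :=
  fun p => (1 / 3 : ℝ) * (u p * dhath h v p + dhath h (fun q => u q * v q) p)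

section AuxNCD

noncomputable def S [NeZero M₁] [NeZero M₂] (u v : GridFun M₁ M₂) : ℝ :=
  ∑ p : ZMod M₁ × ZMod M₂, u p * v p

variable [NeZero M₁] [NeZero M₂]

lemma S_comm (u v : GridFun M₁ M₂) : S u v = S v u := by
  unfold S; exact Finset.sum_congr rfl fun p _ => mul_comm _ _

lemma S_self_nonneg (v : GridFun M₁ M₂) : 0 ≤ S v v :=
  Finset.sum_nonneg fun p _ => mul_self_nonneg _

lemma S_add_left (f g w : GridFun M₁ M₂) : S (fun p => f p + g p) w = S f w + S g w := by
  unfold S; rw [← Finset.sum_add_distrib]; exact Finset.sum_congr rfl fun p _ => by ring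

lemma S_add_right (w f g : GridFun M₁ M₂) : S w (fun p => f p + g p) = S w f + S w g := by
  unfold S; rw [← Finset.sum_add_distrib]; exact Finset.sum_congr rfl fun p _ => by ring

lemma sum_shift_x (f : GridFun M₁ M₂) :
    ∑ p : ZMod M₁ × ZMod M₂, f (p.1 + 1, p.2) = ∑ p : ZMod M₁ × ZMod M₂, f p := by
  apply Fintype.sum_equiv ((Equiv.addRight (1 : ZMod M₁)).prodCongr (Equiv.refl (ZMod M₂)))
  intro _; rfl

lemma sum_shift_x' (f : GridFun M₁ M₂) :
    ∑ p : ZMod M₁ × ZMod M₂, f (p.1 - 1, p.2) = ∑ p : ZMod M₁ × ZMod M₂, f p := by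
  apply Fintype.sum_equiv ((Equiv.subRight (1 : ZMod M₁)).prodCongr (Equiv.refl (ZMod M₂)))
  intro _; rfl

lemma sum_shift_y (f : GridFun M₁ M₂) :
    ∑ p : ZMod M₁ × ZMod M₂, f (p.1, p.2 + 1) = ∑ p : ZMod M₁ × ZMod M₂, f p := by
  apply Fintype.sum_equiv ((Equiv.refl (ZMod M₁)).prodCongr (Equiv.addRight (1 : ZMod M₂)))
  intro _; rfl

lemma sum_shift_y' (f : GridFun M₁ M₂) :
    ∑ p : ZMod M₁ × ZMod M₂, f (p.1, p.2 - 1) = ∑ p : ZMod M₁ × ZMod M₂, f p := by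
  apply Fintype.sum_equiv ((Equiv.refl (ZMod M₁)).prodCongr (Equiv.subRight (1 : ZMod M₂)))
  intro _; rfl

lemma S_dhx_skew (h : ℝ) (f g : GridFun M₁ M₂) : S (dhx h f) g = - S f (dhx h g) := by
  unfold S dhx
  have h1 : ∑ p : ZMod M₁ × ZMod M₂, f (p.1 + 1, p.2) * g p / (2*h)
      = ∑ p : ZMod M₁ × ZMod M₂, f p * g (p.1 - 1, p.2) / (2*h) := by
    rw [← sum_shift_x (fun p => f p * g (p.1 - 1, p.2) / (2*h))]
    exact Finset.sum_congr rfl fun p _ => by simp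
  have h2 : ∑ p : ZMod M₁ × ZMod M₂, f (p.1 - 1, p.2) * g p / (2*h)
      = ∑ p : ZMod M₁ × ZMod M₂, f p * g (p.1 + 1, p.2) / (2*h) := by
    rw [← sum_shift_x' (fun p => f p * g (p.1 + 1, p.2) / (2*h))]
    exact Finset.sum_congr rfl fun p _ => by simp
  calc ∑ p : ZMod M₁ × ZMod M₂, (f (p.1 + 1, p.2) - f (p.1 - 1, p.2)) / (2*h) * g p
      = ∑ p : ZMod M₁ × ZMod M₂, (f (p.1 + 1, p.2) * g p / (2*h) - f (p.1 - 1, p.2) * g p / (2*h)) :=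
        Finset.sum_congr rfl fun p _ => by ring
    _ = ∑ p : ZMod M₁ × ZMod M₂, f p * g (p.1 - 1, p.2) / (2*h)
        - ∑ p : ZMod M₁ × ZMod M₂, f p * g (p.1 + 1, p.2) / (2*h) := by
        rw [Finset.sum_sub_distrib, h1, h2]
    _ = - ∑ p : ZMod M₁ × ZMod M₂, f p * ((g (p.1 + 1, p.2) - g (p.1 - 1, p.2)) / (2*h)) := by
        rw [← Finset.sum_sub_distrib, ← Finset.sum_neg_distrib]
        exact Finset.sum_congr rfl fun p _ => by ring

lemma S_dhy_skew (h : ℝ) (f g : GridFun M₁ M₂) : S (dhy h f) g = - S f (dhy h g) := by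
  unfold S dhy
  have h1 : ∑ p : ZMod M₁ × ZMod M₂, f (p.1, p.2 + 1) * g p / (2*h)
      = ∑ p : ZMod M₁ × ZMod M₂, f p * g (p.1, p.2 - 1) / (2*h) := by
    rw [← sum_shift_y (fun p => f p * g (p.1, p.2 - 1) / (2*h))]
    exact Finset.sum_congr rfl fun p _ => by simp
  have h2 : ∑ p : ZMod M₁ × ZMod M₂, f (p.1, p.2 - 1) * g p / (2*h)
      = ∑ p : ZMod M₁ × ZMod M₂, f p * g (p.1, p.2 + 1) / (2*h) := by
    rw [← sum_shift_y' (fun p => f p * g (p.1, p.2 + 1) / (2*h))]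
    exact Finset.sum_congr rfl fun p _ => by simp
  calc ∑ p : ZMod M₁ × ZMod M₂, (f (p.1, p.2 + 1) - f (p.1, p.2 - 1)) / (2*h) * g p
      = ∑ p : ZMod M₁ × ZMod M₂, (f (p.1, p.2 + 1) * g p / (2*h) - f (p.1, p.2 - 1) * g p / (2*h)) :=
        Finset.sum_congr rfl fun p _ => by ring
    _ = ∑ p : ZMod M₁ × ZMod M₂, f p * g (p.1, p.2 - 1) / (2*h)
        - ∑ p : ZMod M₁ × ZMod M₂, f p * g (p.1, p.2 + 1) / (2*h) := by
        rw [Finset.sum_sub_distrib, h1, h2]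
    _ = - ∑ p : ZMod M₁ × ZMod M₂, f p * ((g (p.1, p.2 + 1) - g (p.1, p.2 - 1)) / (2*h)) := by
        rw [← Finset.sum_sub_distrib, ← Finset.sum_neg_distrib]
        exact Finset.sum_congr rfl fun p _ => by ring

lemma S_dhath_skew (h : ℝ) (f g : GridFun M₁ M₂) : S (dhath h f) g = - S f (dhath h g) := by
  have e1 : S (dhath h f) g = S (dhx h f) g + S (dhy h f) g := by
    unfold dhath; exact S_add_left _ _ _
  have e2 : S f (dhath h g) = S f (dhx h g) + S f (dhy h g) := by
    unfold dhath; exact S_add_right _ _ _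
  rw [e1, e2, S_dhx_skew, S_dhy_skew]; ring

lemma S_dxx_symm (h : ℝ) (f g : GridFun M₁ M₂) : S (dxx h f) g = S f (dxx h g) := by
  unfold S dxx
  have h1 : ∑ p : ZMod M₁ × ZMod M₂, f (p.1 + 1, p.2) * g p / h^2
      = ∑ p : ZMod M₁ × ZMod M₂, f p * g (p.1 - 1, p.2) / h^2 := by
    rw [← sum_shift_x (fun p => f p * g (p.1 - 1, p.2) / h^2)]
    exact Finset.sum_congr rfl fun p _ => by simp
  have h2 : ∑ p : ZMod M₁ × ZMod M₂, f (p.1 - 1, p.2) * g p / h^2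
      = ∑ p : ZMod M₁ × ZMod M₂, f p * g (p.1 + 1, p.2) / h^2 := by
    rw [← sum_shift_x' (fun p => f p * g (p.1 + 1, p.2) / h^2)]
    exact Finset.sum_congr rfl fun p _ => by simp
  calc ∑ p : ZMod M₁ × ZMod M₂, (f (p.1 + 1, p.2) - 2 * f p + f (p.1 - 1, p.2)) / h^2 * g p
      = ∑ p : ZMod M₁ × ZMod M₂, (f (p.1 + 1, p.2) * g p / h^2 - 2 * (f p * g p) / h^2
          + f (p.1 - 1, p.2) * g p / h^2) := Finset.sum_congr rfl fun p _ => by ring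
    _ = ∑ p : ZMod M₁ × ZMod M₂, f (p.1 + 1, p.2) * g p / h^2
        - ∑ p : ZMod M₁ × ZMod M₂, 2 * (f p * g p) / h^2
        + ∑ p : ZMod M₁ × ZMod M₂, f (p.1 - 1, p.2) * g p / h^2 := by
        rw [Finset.sum_add_distrib, Finset.sum_sub_distrib]
    _ = ∑ p : ZMod M₁ × ZMod M₂, f p * g (p.1 - 1, p.2) / h^2
        - ∑ p : ZMod M₁ × ZMod M₂, 2 * (f p * g p) / h^2
        + ∑ p : ZMod M₁ × ZMod M₂, f p * g (p.1 + 1, p.2) / h^2 := by rw [h1, h2]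
    _ = ∑ p : ZMod M₁ × ZMod M₂, f p * ((g (p.1 + 1, p.2) - 2 * g p + g (p.1 - 1, p.2)) / h^2) := by
        rw [show (∑ p : ZMod M₁ × ZMod M₂, f p * ((g (p.1 + 1, p.2) - 2 * g p + g (p.1 - 1, p.2)) / h^2))
          = ∑ p : ZMod M₁ × ZMod M₂, (f p * g (p.1+1,p.2) / h^2 - 2 * (f p * g p) / h^2
              + f p * g (p.1-1,p.2) / h^2) from Finset.sum_congr rfl fun p _ => by ring,
          Finset.sum_add_distrib, Finset.sum_sub_distrib]
        ring

lemma S_dyy_symm (h : ℝ) (f g : GridFun M₁ M₂) : S (dyy h f) g = S f (dyy h g) := by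
  unfold S dyy
  have h1 : ∑ p : ZMod M₁ × ZMod M₂, f (p.1, p.2 + 1) * g p / h^2
      = ∑ p : ZMod M₁ × ZMod M₂, f p * g (p.1, p.2 - 1) / h^2 := by
    rw [← sum_shift_y (fun p => f p * g (p.1, p.2 - 1) / h^2)]
    exact Finset.sum_congr rfl fun p _ => by simp
  have h2 : ∑ p : ZMod M₁ × ZMod M₂, f (p.1, p.2 - 1) * g p / h^2
      = ∑ p : ZMod M₁ × ZMod M₂, f p * g (p.1, p.2 + 1) / h^2 := by
    rw [← sum_shift_y' (fun p => f p * g (p.1, p.2 + 1) / h^2)]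
    exact Finset.sum_congr rfl fun p _ => by simp
  calc ∑ p : ZMod M₁ × ZMod M₂, (f (p.1, p.2 + 1) - 2 * f p + f (p.1, p.2 - 1)) / h^2 * g p
      = ∑ p : ZMod M₁ × ZMod M₂, (f (p.1, p.2 + 1) * g p / h^2 - 2 * (f p * g p) / h^2
          + f (p.1, p.2 - 1) * g p / h^2) := Finset.sum_congr rfl fun p _ => by ring
    _ = ∑ p : ZMod M₁ × ZMod M₂, f (p.1, p.2 + 1) * g p / h^2
        - ∑ p : ZMod M₁ × ZMod M₂, 2 * (f p * g p) / h^2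
        + ∑ p : ZMod M₁ × ZMod M₂, f (p.1, p.2 - 1) * g p / h^2 := by
        rw [Finset.sum_add_distrib, Finset.sum_sub_distrib]
    _ = ∑ p : ZMod M₁ × ZMod M₂, f p * g (p.1, p.2 - 1) / h^2
        - ∑ p : ZMod M₁ × ZMod M₂, 2 * (f p * g p) / h^2
        + ∑ p : ZMod M₁ × ZMod M₂, f p * g (p.1, p.2 + 1) / h^2 := by rw [h1, h2]
    _ = ∑ p : ZMod M₁ × ZMod M₂, f p * ((g (p.1, p.2 + 1) - 2 * g p + g (p.1, p.2 - 1)) / h^2) := by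
        rw [show (∑ p : ZMod M₁ × ZMod M₂, f p * ((g (p.1, p.2 + 1) - 2 * g p + g (p.1, p.2 - 1)) / h^2))
          = ∑ p : ZMod M₁ × ZMod M₂, (f p * g (p.1,p.2+1) / h^2 - 2 * (f p * g p) / h^2
              + f p * g (p.1,p.2-1) / h^2) from Finset.sum_congr rfl fun p _ => by ring,
          Finset.sum_add_distrib, Finset.sum_sub_distrib]
        ring

lemma S_dxx_self (h : ℝ) (f : GridFun M₁ M₂) : S (dxx h f) f = - S (dx h f) (dx h f) := by
  unfold S dxx dx
  have h1 : ∑ p : ZMod M₁ × ZMod M₂, f (p.1 - 1, p.2) * f p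
      = ∑ p : ZMod M₁ × ZMod M₂, f p * f (p.1 + 1, p.2) := by
    rw [← sum_shift_x' (fun p => f p * f (p.1 + 1, p.2))]
    exact Finset.sum_congr rfl fun p _ => by simp
  have h2 : ∑ p : ZMod M₁ × ZMod M₂, f (p.1 + 1, p.2) * f (p.1 + 1, p.2)
      = ∑ p : ZMod M₁ × ZMod M₂, f p * f p :=
    sum_shift_x (fun p => f p * f p)
  have e1 : ∀ k : ℝ, (∑ p : ZMod M₁ × ZMod M₂, (f (p.1 + 1, p.2) - 2 * f p + f (p.1 - 1, p.2)) / k * f p)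
      = (∑ p : ZMod M₁ × ZMod M₂, (f (p.1+1,p.2) * f p + f (p.1-1,p.2) * f p - 2 * (f p * f p))) / k := by
    intro k
    rw [Finset.sum_div]
    exact Finset.sum_congr rfl fun p _ => by ring
  have e2 : (∑ p : ZMod M₁ × ZMod M₂, (f (p.1 + 1, p.2) - f p) / h * ((f (p.1 + 1, p.2) - f p) / h))
      = (∑ p : ZMod M₁ × ZMod M₂, (f (p.1+1,p.2) * f (p.1+1,p.2) + f p * f p
          - 2 * (f (p.1+1,p.2) * f p))) / h^2 := by
    rw [Finset.sum_div]
    exact Finset.sum_congr rfl fun p _ => by ring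
  rw [e1, e2, Finset.sum_sub_distrib, Finset.sum_sub_distrib, Finset.sum_add_distrib,
    Finset.sum_add_distrib, h1, h2]
  have h3 : ∑ p : ZMod M₁ × ZMod M₂, f (p.1 + 1, p.2) * f p
      = ∑ p : ZMod M₁ × ZMod M₂, f p * f (p.1 + 1, p.2) :=
    Finset.sum_congr rfl fun p _ => mul_comm _ _
  have h4 : ∑ p : ZMod M₁ × ZMod M₂, 2 * (f (p.1+1,p.2) * f p)
      = 2 * ∑ p : ZMod M₁ × ZMod M₂, f p * f (p.1+1,p.2) := by
    rw [Finset.mul_sum]; exact Finset.sum_congr rfl fun p _ => by ring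
  have h5 : ∑ p : ZMod M₁ × ZMod M₂, 2 * (f p * f p)
      = 2 * ∑ p : ZMod M₁ × ZMod M₂, f p * f p := by rw [Finset.mul_sum]
  rw [h3, h4, h5]; ring

lemma S_dyy_self (h : ℝ) (f : GridFun M₁ M₂) : S (dyy h f) f = - S (dy h f) (dy h f) := by
  unfold S dyy dy
  have h1 : ∑ p : ZMod M₁ × ZMod M₂, f (p.1, p.2 - 1) * f p
      = ∑ p : ZMod M₁ × ZMod M₂, f p * f (p.1, p.2 + 1) := by
    rw [← sum_shift_y' (fun p => f p * f (p.1, p.2 + 1))]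
    exact Finset.sum_congr rfl fun p _ => by simp
  have h2 : ∑ p : ZMod M₁ × ZMod M₂, f (p.1, p.2 + 1) * f (p.1, p.2 + 1)
      = ∑ p : ZMod M₁ × ZMod M₂, f p * f p :=
    sum_shift_y (fun p => f p * f p)
  have e1 : ∀ k : ℝ, (∑ p : ZMod M₁ × ZMod M₂, (f (p.1, p.2 + 1) - 2 * f p + f (p.1, p.2 - 1)) / k * f p)
      = (∑ p : ZMod M₁ × ZMod M₂, (f (p.1,p.2+1) * f p + f (p.1,p.2-1) * f p - 2 * (f p * f p))) / k := by
    intro k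
    rw [Finset.sum_div]
    exact Finset.sum_congr rfl fun p _ => by ring
  have e2 : (∑ p : ZMod M₁ × ZMod M₂, (f (p.1, p.2 + 1) - f p) / h * ((f (p.1, p.2 + 1) - f p) / h))
      = (∑ p : ZMod M₁ × ZMod M₂, (f (p.1,p.2+1) * f (p.1,p.2+1) + f p * f p
          - 2 * (f (p.1,p.2+1) * f p))) / h^2 := by
    rw [Finset.sum_div]
    exact Finset.sum_congr rfl fun p _ => by ring
  rw [e1, e2, Finset.sum_sub_distrib, Finset.sum_sub_distrib, Finset.sum_add_distrib,
    Finset.sum_add_distrib, h1, h2]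
  have h3 : ∑ p : ZMod M₁ × ZMod M₂, f (p.1, p.2 + 1) * f p
      = ∑ p : ZMod M₁ × ZMod M₂, f p * f (p.1, p.2 + 1) :=
    Finset.sum_congr rfl fun p _ => mul_comm _ _
  have h4 : ∑ p : ZMod M₁ × ZMod M₂, 2 * (f (p.1,p.2+1) * f p)
      = 2 * ∑ p : ZMod M₁ × ZMod M₂, f p * f (p.1,p.2+1) := by
    rw [Finset.mul_sum]; exact Finset.sum_congr rfl fun p _ => by ring
  have h5 : ∑ p : ZMod M₁ × ZMod M₂, 2 * (f p * f p)
      = 2 * ∑ p : ZMod M₁ × ZMod M₂, f p * f p := by rw [Finset.mul_sum]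
  rw [h3, h4, h5]; ring

lemma S_dx_bound (h : ℝ) (f : GridFun M₁ M₂) :
    h^2 * S (dx h f) (dx h f) ≤ 4 * S f f := by
  unfold S dx
  rw [Finset.mul_sum]
  have key : ∀ p : ZMod M₁ × ZMod M₂,
      h^2 * ((f (p.1+1,p.2) - f p)/h * ((f (p.1+1,p.2) - f p)/h))
      ≤ 2 * (f (p.1+1,p.2) * f (p.1+1,p.2)) + 2 * (f p * f p) := by
    intro p
    rcases eq_or_ne h 0 with h0 | h0
    · simp only [h0, div_zero, zero_mul, mul_zero]
      nlinarith [mul_self_nonneg (f (p.1+1,p.2)), mul_self_nonneg (f p)]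
    · have e : h^2 * ((f (p.1+1,p.2) - f p)/h * ((f (p.1+1,p.2) - f p)/h))
          = (f (p.1+1,p.2) - f p) * (f (p.1+1,p.2) - f p) := by
        field_simp
      rw [e]
      nlinarith [sq_nonneg (f (p.1+1,p.2) + f p)]
  calc (∑ p : ZMod M₁ × ZMod M₂, h^2 * ((f (p.1+1,p.2) - f p)/h * ((f (p.1+1,p.2) - f p)/h)))
      ≤ ∑ p : ZMod M₁ × ZMod M₂, (2 * (f (p.1+1,p.2) * f (p.1+1,p.2)) + 2 * (f p * f p)) :=
        Finset.sum_le_sum fun p _ => key p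
    _ = ∑ p : ZMod M₁ × ZMod M₂, 2 * (f (p.1+1,p.2) * f (p.1+1,p.2))
        + ∑ p : ZMod M₁ × ZMod M₂, 2 * (f p * f p) := Finset.sum_add_distrib
    _ = 4 * ∑ p : ZMod M₁ × ZMod M₂, f p * f p := by
        rw [show (∑ p : ZMod M₁ × ZMod M₂, 2 * (f (p.1+1,p.2) * f (p.1+1,p.2)))
          = ∑ p : ZMod M₁ × ZMod M₂, 2 * (f p * f p) from
            sum_shift_x (fun p => 2 * (f p * f p)),
          ← Finset.sum_add_distrib, Finset.mul_sum]
        exact Finset.sum_congr rfl fun p _ => by ring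

lemma S_dy_bound (h : ℝ) (f : GridFun M₁ M₂) :
    h^2 * S (dy h f) (dy h f) ≤ 4 * S f f := by
  unfold S dy
  rw [Finset.mul_sum]
  have key : ∀ p : ZMod M₁ × ZMod M₂,
      h^2 * ((f (p.1,p.2+1) - f p)/h * ((f (p.1,p.2+1) - f p)/h))
      ≤ 2 * (f (p.1,p.2+1) * f (p.1,p.2+1)) + 2 * (f p * f p) := by
    intro p
    rcases eq_or_ne h 0 with h0 | h0
    · simp only [h0, div_zero, zero_mul, mul_zero]
      nlinarith [mul_self_nonneg (f (p.1,p.2+1)), mul_self_nonneg (f p)]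
    · have e : h^2 * ((f (p.1,p.2+1) - f p)/h * ((f (p.1,p.2+1) - f p)/h))
          = (f (p.1,p.2+1) - f p) * (f (p.1,p.2+1) - f p) := by
        field_simp
      rw [e]
      nlinarith [sq_nonneg (f (p.1,p.2+1) + f p)]
  calc (∑ p : ZMod M₁ × ZMod M₂, h^2 * ((f (p.1,p.2+1) - f p)/h * ((f (p.1,p.2+1) - f p)/h)))
      ≤ ∑ p : ZMod M₁ × ZMod M₂, (2 * (f (p.1,p.2+1) * f (p.1,p.2+1)) + 2 * (f p * f p)) :=
        Finset.sum_le_sum fun p _ => key p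
    _ = ∑ p : ZMod M₁ × ZMod M₂, 2 * (f (p.1,p.2+1) * f (p.1,p.2+1))
        + ∑ p : ZMod M₁ × ZMod M₂, 2 * (f p * f p) := Finset.sum_add_distrib
    _ = 4 * ∑ p : ZMod M₁ × ZMod M₂, f p * f p := by
        rw [show (∑ p : ZMod M₁ × ZMod M₂, 2 * (f (p.1,p.2+1) * f (p.1,p.2+1)))
          = ∑ p : ZMod M₁ × ZMod M₂, 2 * (f p * f p) from
            sum_shift_y (fun p => 2 * (f p * f p)),
          ← Finset.sum_add_distrib, Finset.mul_sum]
        exact Finset.sum_congr rfl fun p _ => by ring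

end AuxNCD

section AuxNCD2
variable [NeZero M₁] [NeZero M₂]

lemma SVU_nonpos_x (h : ℝ) (U V : GridFun M₁ M₂)
    (hrel : ∀ p, V p = dxx h U p - h^2/12 * dxx h V p) : S V U ≤ 0 := by
  have hUxx : ∀ p, dxx h U p = V p + h^2/12 * dxx h V p := fun p => by
    have := hrel p; linarith
  have e1 : S V U = S (dxx h U) U - h^2/12 * S (dxx h V) U := by
    unfold S
    rw [Finset.mul_sum, ← Finset.sum_sub_distrib]
    refine Finset.sum_congr rfl fun p _ => ?_
    rw [hrel p]; ring
  have e2 : S (dxx h V) U = S V V + h^2/12 * S V (dxx h V) := by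
    rw [S_dxx_symm]
    unfold S
    rw [Finset.mul_sum, ← Finset.sum_add_distrib]
    refine Finset.sum_congr rfl fun p _ => ?_
    rw [hUxx p]; ring
  have e3 : S V (dxx h V) = - S (dx h V) (dx h V) := by rw [S_comm, S_dxx_self]
  have e4 : S (dxx h U) U = - S (dx h U) (dx h U) := S_dxx_self h U
  have hb := S_dx_bound h V
  have n1 := S_self_nonneg (dx h U)
  have n2 := S_self_nonneg V
  have n3 := S_self_nonneg (dx h V)
  have h6 : h^2/12 * (h^2/12 * S (dx h V) (dx h V)) ≤ h^2/36 * S V V := by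
    nlinarith [sq_nonneg h]
  rw [e1, e2, e3, e4]
  nlinarith [sq_nonneg h]

lemma SVU_nonpos_y (h : ℝ) (U V : GridFun M₁ M₂)
    (hrel : ∀ p, V p = dyy h U p - h^2/12 * dyy h V p) : S V U ≤ 0 := by
  have hUyy : ∀ p, dyy h U p = V p + h^2/12 * dyy h V p := fun p => by
    have := hrel p; linarith
  have e1 : S V U = S (dyy h U) U - h^2/12 * S (dyy h V) U := by
    unfold S
    rw [Finset.mul_sum, ← Finset.sum_sub_distrib]
    refine Finset.sum_congr rfl fun p _ => ?_
    rw [hrel p]; ring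
  have e2 : S (dyy h V) U = S V V + h^2/12 * S V (dyy h V) := by
    rw [S_dyy_symm]
    unfold S
    rw [Finset.mul_sum, ← Finset.sum_add_distrib]
    refine Finset.sum_congr rfl fun p _ => ?_
    rw [hUyy p]; ring
  have e3 : S V (dyy h V) = - S (dy h V) (dy h V) := by rw [S_comm, S_dyy_self]
  have e4 : S (dyy h U) U = - S (dy h U) (dy h U) := S_dyy_self h U
  have hb := S_dy_bound h V
  have n1 := S_self_nonneg (dy h U)
  have n2 := S_self_nonneg V
  have n3 := S_self_nonneg (dy h V)
  have h6 : h^2/12 * (h^2/12 * S (dy h V) (dy h V)) ≤ h^2/36 * S V V := by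
    nlinarith [sq_nonneg h]
  rw [e1, e2, e3, e4]
  nlinarith [sq_nonneg h]

lemma step_ineq (h τ lam : ℝ) (hτ : 0 < τ) (hlam : 0 < lam)
    (ur ur' vb wb : GridFun M₁ M₂)
    (hvb : S vb (fun q => (ur q + ur' q) / 2) ≤ 0)
    (hwb : S wb (fun q => (ur q + ur' q) / 2) ≤ 0)
    (heq : ∀ p, (ur p - ur' p) / τ
        + psih h (fun q => (ur q + ur' q) / 2) (fun q => (ur q + ur' q) / 2) p
        - h ^ 2 / 2 * (psix h vb (fun q => (ur q + ur' q) / 2) p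
            + psiy h wb (fun q => (ur q + ur' q) / 2) p)
      = lam * (vb p + wb p)) :
    S ur ur ≤ S ur' ur' := by
  set ub : GridFun M₁ M₂ := fun q => (ur q + ur' q) / 2 with hub
  have hsum : ∑ p : ZMod M₁ × ZMod M₂,
      ((ur p - ur' p) / τ + psih h ub ub p
        - h ^ 2 / 2 * (psix h vb ub p + psiy h wb ub p)) * ub p
      = ∑ p : ZMod M₁ × ZMod M₂, (lam * (vb p + wb p)) * ub p :=
    Finset.sum_congr rfl fun p _ => by rw [heq p]
  have hsplit : ∑ p : ZMod M₁ × ZMod M₂,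
      ((ur p - ur' p) / τ + psih h ub ub p
        - h ^ 2 / 2 * (psix h vb ub p + psiy h wb ub p)) * ub p
      = (∑ p : ZMod M₁ × ZMod M₂, (ur p - ur' p) / τ * ub p)
        + (∑ p : ZMod M₁ × ZMod M₂, psih h ub ub p * ub p)
        - h ^ 2 / 2 * ((∑ p : ZMod M₁ × ZMod M₂, psix h vb ub p * ub p)
            + (∑ p : ZMod M₁ × ZMod M₂, psiy h wb ub p * ub p)) := by
    rw [show (∑ p : ZMod M₁ × ZMod M₂,
        ((ur p - ur' p) / τ + psih h ub ub p
          - h ^ 2 / 2 * (psix h vb ub p + psiy h wb ub p)) * ub p)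
      = ∑ p : ZMod M₁ × ZMod M₂,
          ((ur p - ur' p) / τ * ub p + psih h ub ub p * ub p
            - h ^ 2 / 2 * (psix h vb ub p * ub p + psiy h wb ub p * ub p)) from
      Finset.sum_congr rfl fun p _ => by ring,
      Finset.sum_sub_distrib, Finset.sum_add_distrib, ← Finset.mul_sum,
      Finset.sum_add_distrib]
  have hT0 : (∑ p : ZMod M₁ × ZMod M₂, (ur p - ur' p) / τ * ub p)
      = (S ur ur - S ur' ur') / (2 * τ) := by
    unfold S
    rw [eq_div_iff (by positivity : (2 * τ : ℝ) ≠ 0), Finset.sum_mul,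
      ← Finset.sum_sub_distrib]
    refine Finset.sum_congr rfl fun p _ => ?_
    simp only [hub]
    field_simp
    ring
  have hP : (∑ p : ZMod M₁ × ZMod M₂, psih h ub ub p * ub p) = 0 := by
    have e : (∑ p : ZMod M₁ × ZMod M₂, psih h ub ub p * ub p)
        = 1/3 * (S (dhath h ub) (fun q => ub q * ub q)
            + S (dhath h (fun q => ub q * ub q)) ub) := by
      unfold S psih
      rw [mul_add, Finset.mul_sum, Finset.mul_sum, ← Finset.sum_add_distrib]
      exact Finset.sum_congr rfl fun p _ => by ring
    rw [e, S_dhath_skew h (fun q => ub q * ub q) ub,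
      S_comm (dhath h ub) (fun q => ub q * ub q)]
    ring
  have hQ : (∑ p : ZMod M₁ × ZMod M₂, psix h vb ub p * ub p) = 0 := by
    have e : (∑ p : ZMod M₁ × ZMod M₂, psix h vb ub p * ub p)
        = 1/3 * (S (dhx h ub) (fun q => vb q * ub q)
            + S (dhx h (fun q => vb q * ub q)) ub) := by
      unfold S psix
      rw [mul_add, Finset.mul_sum, Finset.mul_sum, ← Finset.sum_add_distrib]
      exact Finset.sum_congr rfl fun p _ => by ring
    rw [e, S_dhx_skew h (fun q => vb q * ub q) ub,
      S_comm (dhx h ub) (fun q => vb q * ub q)]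
    ring
  have hR : (∑ p : ZMod M₁ × ZMod M₂, psiy h wb ub p * ub p) = 0 := by
    have e : (∑ p : ZMod M₁ × ZMod M₂, psiy h wb ub p * ub p)
        = 1/3 * (S (dhy h ub) (fun q => wb q * ub q)
            + S (dhy h (fun q => wb q * ub q)) ub) := by
      unfold S psiy
      rw [mul_add, Finset.mul_sum, Finset.mul_sum, ← Finset.sum_add_distrib]
      exact Finset.sum_congr rfl fun p _ => by ring
    rw [e, S_dhy_skew h (fun q => wb q * ub q) ub,
      S_comm (dhy h ub) (fun q => wb q * ub q)]
    ring
  have hRHS : (∑ p : ZMod M₁ × ZMod M₂, (lam * (vb p + wb p)) * ub p)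
      = lam * (S vb ub + S wb ub) := by
    unfold S
    rw [mul_add lam, Finset.mul_sum, Finset.mul_sum, ← Finset.sum_add_distrib]
    exact Finset.sum_congr rfl fun p _ => by ring
  have E0 := hsum
  rw [hsplit, hT0, hP, hQ, hR, hRHS] at E0
  -- E0 : (S ur ur - S ur' ur')/(2τ) + 0 - h^2/2*(0+0) = lam * (S vb ub + S wb ub)
  have hneg : lam * (S vb ub + S wb ub) ≤ 0 := by nlinarith
  have hdiv : (S ur ur - S ur' ur') / (2 * τ) ≤ 0 := by linarith
  rcases div_nonpos_iff.mp hdiv with ⟨h1, h2⟩ | ⟨h1, h2⟩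
  · linarith
  · linarith

lemma gip_eq_S (h : ℝ) (u v : GridFun M₁ M₂) : gip h u v = h ^ 2 * S u v := by
  unfold gip S
  rw [Fintype.sum_prod_type (f := fun p : ZMod M₁ × ZMod M₂ => u p * v p)]

end AuxNCD2

/-- L²-boundedness of the nonlinear compact difference scheme. -/
theorem ncd_l2_bounded [NeZero M₁] [NeZero M₂]
    (h τ lam : ℝ) (hh : 0 < h) (hτ : 0 < τ) (hlam : 0 < lam)
    (N : ℕ) (hN : 1 ≤ N) (u v w : ℕ → GridFun M₁ M₂)
    (heq : ∀ r, 1 ≤ r → r ≤ N → ∀ p,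
      (u r p - u (r - 1) p) / τ
        + psih h (fun q => (u r q + u (r - 1) q) / 2)
            (fun q => (u r q + u (r - 1) q) / 2) p
        - h ^ 2 / 2 *
            (psix h (fun q => (v r q + v (r - 1) q) / 2)
                (fun q => (u r q + u (r - 1) q) / 2) p
              + psiy h (fun q => (w r q + w (r - 1) q) / 2)
                  (fun q => (u r q + u (r - 1) q) / 2) p)
      = lam * ((v r p + v (r - 1) p) / 2 + (w r p + w (r - 1) p) / 2))
    (hv : ∀ r, r ≤ N → ∀ p, v r p = dxx h (u r) p - h ^ 2 / 12 * dxx h (v r) p)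
    (hw : ∀ r, r ≤ N → ∀ p, w r p = dyy h (u r) p - h ^ 2 / 12 * dyy h (w r) p) :
    ∀ m, 1 ≤ m → m ≤ N → gnorm h (u m) ≤ gnorm h (u 0) := by
  have step : ∀ r, 1 ≤ r → r ≤ N → S (u r) (u r) ≤ S (u (r-1)) (u (r-1)) := by
    intro r hr1 hrN
    have hr' : r - 1 ≤ N := le_trans (Nat.sub_le r 1) hrN
    have hrelv : ∀ p, (fun q => (v r q + v (r-1) q) / 2) p
        = dxx h (fun q => (u r q + u (r-1) q) / 2) p
          - h ^ 2 / 12 * dxx h (fun q => (v r q + v (r-1) q) / 2) p := by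
      intro p
      have h1 := hv r hrN p
      have h2 := hv (r-1) hr' p
      simp only [dxx] at h1 h2 ⊢
      linear_combination h1 / 2 + h2 / 2
    have hrelw : ∀ p, (fun q => (w r q + w (r-1) q) / 2) p
        = dyy h (fun q => (u r q + u (r-1) q) / 2) p
          - h ^ 2 / 12 * dyy h (fun q => (w r q + w (r-1) q) / 2) p := by
      intro p
      have h1 := hw r hrN p
      have h2 := hw (r-1) hr' p
      simp only [dyy] at h1 h2 ⊢
      linear_combination h1 / 2 + h2 / 2
    have hvb := SVU_nonpos_x h (fun q => (u r q + u (r-1) q) / 2)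
      (fun q => (v r q + v (r-1) q) / 2) hrelv
    have hwb := SVU_nonpos_y h (fun q => (u r q + u (r-1) q) / 2)
      (fun q => (w r q + w (r-1) q) / 2) hrelw
    exact step_ineq h τ lam hτ hlam (u r) (u (r-1))
      (fun q => (v r q + v (r-1) q) / 2) (fun q => (w r q + w (r-1) q) / 2)
      hvb hwb (fun p => heq r hr1 hrN p)
  have key : ∀ m, m ≤ N → S (u m) (u m) ≤ S (u 0) (u 0) := by
    intro m
    induction m with
    | zero => intro _; exact le_rfl
    | succ k ih =>
      intro hk
      have hs := step (k+1) (Nat.le_add_left 1 k) hk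
      simp only [Nat.add_sub_cancel] at hs
      rcases Nat.eq_zero_or_pos k with h0 | h0
      · subst h0; simpa using hs
      · exact le_trans hs (ih (by omega))
  intro m hm1 hmN
  have hS := key m hmN
  unfold gnorm
  rw [gip_eq_S, gip_eq_S]
  exact Real.sqrt_le_sqrt (mul_le_mul_of_nonneg_left hS (by positivity))
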